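/- Let φ ∈ Φ with first absolute moment M₁(φ) := sup_{x>0} ∑_{k∈ℤ} |φ(e^{-k}x)| |k − log x| < ∞, and let f be bounded and log-uniformly continuous on ℝ⁺. Then for every δ > 0, w > 0, and x > 0: |(S_w^φ f)(x) − f(x)| ≤ M₀(φ) ω(f, δ) + (ω(f,δ)/(wδ)) M₁(φ), where ω(f,δ) := sup{ |f(s) − f(t)| : |log s − log t| ≤ δ }. -/

import Mathlib

set_option maxHeartbeats 1000000


open Real Filter

/-- The generalized exponential sampling operator. -/
noncomputable def expSampling (φ f : ℝ → ℝ) (w x : ℝ) : ℝ :=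
  ∑' k : ℤ, f (Real.exp (k / w)) * φ (Real.exp (-k) * x ^ w)

/-- `M₀(φ) = sup_{u>0} ∑_k |φ(e^{-k}u)|`. -/
noncomputable def M0 (φ : ℝ → ℝ) : ℝ :=
  ⨆ u : Set.Ioi (0:ℝ), ∑' k : ℤ, |φ (Real.exp (-k) * u)|

/-- `M₁(φ) = sup_{x>0} ∑_k |φ(e^{-k}x)| |k - log x|`. -/
noncomputable def M1 (φ : ℝ → ℝ) : ℝ :=
  ⨆ x : Set.Ioi (0:ℝ), ∑' k : ℤ, |φ (Real.exp (-k) * x)| * |(k : ℝ) - Real.log x|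

/-- The logarithmic modulus of continuity
`ω(f,δ) = sup {|f s - f t| : s,t > 0, |log s - log t| ≤ δ}`. -/
noncomputable def logModulus (f : ℝ → ℝ) (δ : ℝ) : ℝ :=
  ⨆ p : {p : ℝ × ℝ // 0 < p.1 ∧ 0 < p.2 ∧ |Real.log p.1 - Real.log p.2| ≤ δ},
    |f (p : ℝ × ℝ).1 - f (p : ℝ × ℝ).2|

lemma logModulus_bdd (f : ℝ → ℝ) (δ B : ℝ) (hB : ∀ x : ℝ, 0 < x → |f x| ≤ B) :
    BddAbove (Set.range fun p : {p : ℝ × ℝ // 0 < p.1 ∧ 0 < p.2 ∧ |Real.log p.1 - Real.log p.2| ≤ δ} =>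
      |f (p : ℝ × ℝ).1 - f (p : ℝ × ℝ).2|) := by
  refine ⟨2 * B, ?_⟩
  rintro y ⟨⟨⟨s, t⟩, hs, ht, hst⟩, rfl⟩
  have h1 := hB s hs
  have h2 := hB t ht
  have h := abs_sub (f s) (f t)
  simp only at *
  linarith [abs_sub (f s) (f t)]

lemma le_logModulus (f : ℝ → ℝ) (δ B : ℝ) (hB : ∀ x : ℝ, 0 < x → |f x| ≤ B)
    (s t : ℝ) (hs : 0 < s) (ht : 0 < t) (h : |Real.log s - Real.log t| ≤ δ) :
    |f s - f t| ≤ logModulus f δ :=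
  le_ciSup (logModulus_bdd f δ B hB) ⟨(s, t), hs, ht, h⟩

lemma logModulus_nonneg (f : ℝ → ℝ) (δ B : ℝ) (hδ : 0 ≤ δ)
    (hB : ∀ x : ℝ, 0 < x → |f x| ≤ B) : 0 ≤ logModulus f δ := by
  have := le_logModulus f δ B hB 1 1 one_pos one_pos (by simp [hδ])
  simpa using this

lemma chain (f : ℝ → ℝ) (δ B : ℝ) (hδ : 0 < δ) (hB : ∀ x : ℝ, 0 < x → |f x| ≤ B)
    (s t : ℝ) (hs : 0 < s) (ht : 0 < t) :
    |f s - f t| ≤ (1 + |Real.log s - Real.log t| / δ) * logModulus f δ := by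
  have hω0 : 0 ≤ logModulus f δ := logModulus_nonneg f δ B hδ.le hB
  set d := |Real.log s - Real.log t| with hd_def
  have hd : 0 ≤ d := abs_nonneg _
  set n : ℕ := ⌈d / δ⌉₊ with hn_def
  by_cases hn : n = 0
  · have h0 : d / δ ≤ 0 := by rwa [← Nat.ceil_eq_zero (R := ℝ), ← hn_def]
    have hd0 : d = 0 := le_antisymm (by nlinarith [mul_le_mul_of_nonneg_right h0 hδ.le, div_mul_cancel₀ d hδ.ne']) hd
    have hle : d ≤ δ := by rw [hd0]; exact hδ.le
    have := le_logModulus f δ B hB s t hs ht hle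
    nlinarith [div_nonneg hd hδ.le]
  · have hn1 : (1:ℝ) ≤ n := by exact_mod_cast Nat.one_le_iff_ne_zero.mpr hn
    have hnpos : (0:ℝ) < n := by linarith
    set a : ℕ → ℝ := fun i => Real.log s + (i : ℝ) * (Real.log t - Real.log s) / n with ha_def
    have ha0 : a 0 = Real.log s := by simp [ha_def]
    have han : a n = Real.log t := by
      simp only [ha_def]
      field_simp
      ring
    have hdn : d / n ≤ δ := by
      rw [div_le_iff₀ hnpos, mul_comm]
      have h1 : d / δ ≤ (n : ℝ) := Nat.le_ceil _
      calc d = d / δ * δ := by field_simp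
        _ ≤ n * δ := mul_le_mul_of_nonneg_right h1 hδ.le
    have hstep : ∀ i : ℕ, |a i - a (i + 1)| ≤ δ := by
      intro i
      have : a i - a (i + 1) = -((Real.log t - Real.log s) / n) := by
        simp only [ha_def]; push_cast; ring
      rw [this, abs_neg, abs_div, abs_of_pos hnpos]
      have : |Real.log t - Real.log s| = d := abs_sub_comm _ _
      rw [this]; exact hdn
    set g : ℕ → ℝ := fun i => f (Real.exp (a i)) with hg_def
    have htel : f s - f t = ∑ i ∈ Finset.range n, (g i - g (i + 1)) := by
      rw [Finset.sum_range_sub' g]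
      simp only [hg_def, ha0, han, Real.exp_log hs, Real.exp_log ht]
    have hterm : ∀ i : ℕ, |g i - g (i + 1)| ≤ logModulus f δ := by
      intro i
      apply le_logModulus f δ B hB _ _ (Real.exp_pos _) (Real.exp_pos _)
      rw [Real.log_exp, Real.log_exp]
      exact hstep i
    have hbound : |f s - f t| ≤ n * logModulus f δ := by
      rw [htel]
      calc |∑ i ∈ Finset.range n, (g i - g (i + 1))|
          ≤ ∑ i ∈ Finset.range n, |g i - g (i + 1)| := Finset.abs_sum_le_sum_abs _ _
        _ ≤ ∑ _i ∈ Finset.range n, logModulus f δ := Finset.sum_le_sum fun i _ => hterm i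
        _ = n * logModulus f δ := by simp [mul_comm]
    have hceil : (n : ℝ) ≤ d / δ + 1 := by
      have := Nat.ceil_lt_add_one (div_nonneg hd hδ.le)
      exact le_of_lt (by exact_mod_cast this)
    calc |f s - f t| ≤ n * logModulus f δ := hbound
      _ ≤ (1 + d / δ) * logModulus f δ := by nlinarith

/-- Quantitative estimate for the generalized exponential sampling series. -/
theorem quantitative_estimate
    (φ f : ℝ → ℝ)
    (hφcont : ContinuousOn φ (Set.Ioi (0:ℝ)))
    (hsum : ∀ u : ℝ, 0 < u → Summable fun k : ℤ => |φ (Real.exp (-k) * u)|)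
    (hpart : ∀ u : ℝ, 0 < u → ∑' k : ℤ, φ (Real.exp (-k) * u) = 1)
    (hM0 : BddAbove (Set.range fun u : Set.Ioi (0:ℝ) =>
      ∑' k : ℤ, |φ (Real.exp (-k) * u)|))
    (hsum1 : ∀ x : ℝ, 0 < x →
      Summable fun k : ℤ => |φ (Real.exp (-k) * x)| * |(k : ℝ) - Real.log x|)
    (hM1 : BddAbove (Set.range fun x : Set.Ioi (0:ℝ) =>
      ∑' k : ℤ, |φ (Real.exp (-k) * x)| * |(k : ℝ) - Real.log x|))
    (hfbd : ∃ B : ℝ, ∀ x : ℝ, 0 < x → |f x| ≤ B)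
    (hfluc : ∀ ε > (0:ℝ), ∃ δ > (0:ℝ), ∀ u v : ℝ, 0 < u → 0 < v →
      |Real.log u - Real.log v| ≤ δ → |f u - f v| < ε) :
    ∀ δ > (0:ℝ), ∀ w > (0:ℝ), ∀ x > (0:ℝ),
      |expSampling φ f w x - f x| ≤
        M0 φ * logModulus f δ + logModulus f δ / (w * δ) * M1 φ := by
  obtain ⟨B, hB⟩ := hfbd
  intro δ hδ w hw x hx
  set ω := logModulus f δ with hω_def
  have hω0 : 0 ≤ ω := logModulus_nonneg f δ B hδ.le hB
  set u : ℝ := x ^ w with hu_def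
  have hu : 0 < u := Real.rpow_pos_of_pos hx w
  have hlogu : Real.log u = w * Real.log x := Real.log_rpow hx w
  have hφa : Summable fun k : ℤ => |φ (Real.exp (-k) * u)| := hsum u hu
  have hφs : Summable fun k : ℤ => φ (Real.exp (-k) * u) := hφa.of_abs
  have hφ1 : Summable fun k : ℤ => |φ (Real.exp (-k) * u)| * |(k : ℝ) - Real.log u| :=
    hsum1 u hu
  -- the sampling series terms
  set g : ℤ → ℝ := fun k => f (Real.exp (k / w)) * φ (Real.exp (-k) * u) with hg_def
  have hB0 : 0 ≤ B := le_trans (abs_nonneg _) (hB 1 one_pos)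
  have hga : Summable fun k : ℤ => |g k| := by
    apply Summable.of_nonneg_of_le (fun k => abs_nonneg _) (fun k => ?_) (hφa.mul_left B)
    rw [hg_def]; simp only [abs_mul]
    exact mul_le_mul_of_nonneg_right (hB _ (Real.exp_pos _)) (abs_nonneg _)
  have hg : Summable g := hga.of_abs
  -- rewrite the difference
  have hdiff : expSampling φ f w x - f x
      = ∑' k : ℤ, (f (Real.exp (k / w)) - f x) * φ (Real.exp (-k) * u) := by
    have h2 : (∑' k : ℤ, f x * φ (Real.exp (-k) * u)) = f x := by
      rw [tsum_mul_left, hpart u hu, mul_one]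
    calc expSampling φ f w x - f x
        = (∑' k : ℤ, g k) - ∑' k : ℤ, f x * φ (Real.exp (-k) * u) := by rw [h2]; rfl
      _ = ∑' k : ℤ, (g k - f x * φ (Real.exp (-k) * u)) :=
          (Summable.tsum_sub hg (hφs.mul_left (f x))).symm
      _ = ∑' k : ℤ, (f (Real.exp (k / w)) - f x) * φ (Real.exp (-k) * u) :=
          tsum_congr fun k => by simp only [hg_def]; ring
  -- pointwise bound
  set bound : ℤ → ℝ := fun k =>
    ω * |φ (Real.exp (-k) * u)|
      + ω / (w * δ) * (|φ (Real.exp (-k) * u)| * |(k : ℝ) - Real.log u|) with hbound_def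
  have hwδ : 0 < w * δ := mul_pos hw hδ
  have hpt : ∀ k : ℤ, |(f (Real.exp (k / w)) - f x) * φ (Real.exp (-k) * u)| ≤ bound k := by
    intro k
    rw [abs_mul]
    have hc := chain f δ B hδ hB (Real.exp (k / w)) x (Real.exp_pos _) hx
    rw [Real.log_exp] at hc
    have habs : |(k : ℝ) / w - Real.log x| = |(k : ℝ) - Real.log u| / w := by
      rw [hlogu, show (k : ℝ) / w - Real.log x = ((k : ℝ) - w * Real.log x) / w by field_simp,
        abs_div, abs_of_pos hw]
    rw [habs] at hc
    have h1 : |f (Real.exp (k / w)) - f x| * |φ (Real.exp (-k) * u)|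
        ≤ (1 + |(k : ℝ) - Real.log u| / w / δ) * ω * |φ (Real.exp (-k) * u)| :=
      mul_le_mul_of_nonneg_right hc (abs_nonneg _)
    refine h1.trans (le_of_eq ?_)
    rw [hbound_def]
    field_simp
  have hbsum : Summable bound :=
    Summable.add (hφa.mul_left ω) (hφ1.mul_left (ω / (w * δ)))
  have habsum : Summable fun k : ℤ => |(f (Real.exp (k / w)) - f x) * φ (Real.exp (-k) * u)| :=
    Summable.of_nonneg_of_le (fun k => abs_nonneg _) hpt hbsum
  -- main estimate
  have hS0 : (∑' k : ℤ, |φ (Real.exp (-k) * u)|) ≤ M0 φ :=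
    le_ciSup hM0 (⟨u, hu⟩ : Set.Ioi (0:ℝ))
  have hS1 : (∑' k : ℤ, |φ (Real.exp (-k) * u)| * |(k : ℝ) - Real.log u|) ≤ M1 φ :=
    le_ciSup hM1 (⟨u, hu⟩ : Set.Ioi (0:ℝ))
  have hS0' : 0 ≤ ∑' k : ℤ, |φ (Real.exp (-k) * u)| := tsum_nonneg fun k => abs_nonneg _
  calc |expSampling φ f w x - f x|
      = |∑' k : ℤ, (f (Real.exp (k / w)) - f x) * φ (Real.exp (-k) * u)| := by rw [hdiff]
    _ ≤ ∑' k : ℤ, |(f (Real.exp (k / w)) - f x) * φ (Real.exp (-k) * u)| := by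
        have h := norm_tsum_le_tsum_norm
          (f := fun k : ℤ => (f (Real.exp (k / w)) - f x) * φ (Real.exp (-k) * u))
          (by simp only [Real.norm_eq_abs]; exact habsum)
        simp only [Real.norm_eq_abs] at h; exact h
    _ ≤ ∑' k : ℤ, bound k := Summable.tsum_le_tsum hpt habsum hbsum
    _ = ω * (∑' k : ℤ, |φ (Real.exp (-k) * u)|)
        + ω / (w * δ) * (∑' k : ℤ, |φ (Real.exp (-k) * u)| * |(k : ℝ) - Real.log u|) := by
        rw [hbound_def, Summable.tsum_add (hφa.mul_left ω) (hφ1.mul_left (ω / (w * δ))),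
          tsum_mul_left, tsum_mul_left]
    _ ≤ M0 φ * ω + ω / (w * δ) * M1 φ := by
        have hq : 0 ≤ ω / (w * δ) := div_nonneg hω0 hwδ.le
        have := mul_le_mul_of_nonneg_left hS1 hq
        nlinarith [mul_le_mul_of_nonneg_right hS0 hω0]
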